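/- Let m ≥ 3 be an odd integer and let p be an odd prime such that 2m^p − 1 is a square-free integer. Then neither 2^{(p−1)/2}·(1 + √(1 − 2m^p)) nor −2^{(p−1)/2}·(1 + √(1 − 2m^p)) is a p-th power of an element of the ring of integers of ℚ(√(1 − 2m^p)). -/

import Mathlib

open Polynomial NumberField

/-- A fixed choice of complex square root of the integer `d`. -/
noncomputable def sqrtC (d : ℤ) : ℂ := (d : ℂ) ^ ((1 : ℂ) / 2)

lemma sqrtC_sq (d : ℤ) : sqrtC d ^ 2 = (d : ℂ) := by
  unfold sqrtC
  rcases eq_or_ne (d : ℂ) 0 with h | h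
  · rw [h, Complex.zero_cpow (by norm_num : (1 : ℂ) / 2 ≠ 0)]
    simp
  · rw [pow_two, ← Complex.cpow_add _ _ h]
    norm_num

lemma isIntegral_sqrtC (d : ℤ) : IsIntegral ℚ (sqrtC d) := by
  refine ⟨X ^ 2 - C (d : ℚ), monic_X_pow_sub_C _ two_ne_zero, ?_⟩
  have : (Polynomial.aeval (sqrtC d)) (X ^ 2 - C (d : ℚ)) = 0 := by
    simp [sqrtC_sq]
  simpa [Polynomial.aeval_def] using this

/-- The (number) field `ℚ(√d)`, realized as a subfield of `ℂ`. -/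
noncomputable def Qsqrt (d : ℤ) : IntermediateField ℚ ℂ :=
  IntermediateField.adjoin ℚ {sqrtC d}

instance (d : ℤ) : FiniteDimensional ℚ (Qsqrt d) :=
  IntermediateField.adjoin.finiteDimensional (isIntegral_sqrtC d)

instance (d : ℤ) : NumberField (Qsqrt d) := ⟨⟩

/-- The element `√d` of `ℚ(√d)`. -/
noncomputable def sqrtElem (d : ℤ) : Qsqrt d :=
  ⟨sqrtC d, IntermediateField.mem_adjoin_simple_self ℚ (sqrtC d)⟩

-- my aux lemmas

lemma isIntegral_int_sqrtC (d : ℤ) : IsIntegral ℤ (sqrtC d) := by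
  refine ⟨X ^ 2 - C d, monic_X_pow_sub_C _ two_ne_zero, ?_⟩
  have : (Polynomial.aeval (sqrtC d)) (X ^ 2 - C d) = 0 := by
    simp [sqrtC_sq]
  simpa [Polynomial.aeval_def] using this

lemma sqrtC_props {d : ℤ} (hd : d < 0) :
    (sqrtC d).re = 0 ∧ (sqrtC d).im * (sqrtC d).im = -d := by
  have hd' : (d : ℝ) < 0 := by exact_mod_cast hd
  have h1 : (sqrtC d).re * (sqrtC d).re - (sqrtC d).im * (sqrtC d).im = (d : ℝ) := by
    have := congrArg Complex.re (sqrtC_sq d)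
    simpa [pow_two, Complex.mul_re] using this
  have h2 : (sqrtC d).re * (sqrtC d).im + (sqrtC d).im * (sqrtC d).re = 0 := by
    have := congrArg Complex.im (sqrtC_sq d)
    simpa [pow_two, Complex.mul_im] using this
  have him : (sqrtC d).im ≠ 0 := by
    intro h0
    rw [h0] at h1
    nlinarith
  have hre : (sqrtC d).re = 0 := by
    have h3 : (sqrtC d).re * (sqrtC d).im = 0 := by linarith [h2]
    rcases mul_eq_zero.mp h3 with h | h
    · exact h
    · exact absurd h him
  refine ⟨hre, ?_⟩
  rw [hre] at h1
  linarith

lemma Qsqrt_repr {d : ℤ} (z : Qsqrt d) :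
    ∃ a b : ℚ, (z : ℂ) = (a : ℂ) + (b : ℂ) * sqrtC d := by
  have hz : (z : ℂ) ∈ (IntermediateField.adjoin ℚ {sqrtC d}).toSubalgebra := z.2
  rw [IntermediateField.adjoin_simple_toSubalgebra_of_isAlgebraic (isIntegral_sqrtC d).isAlgebraic,
    Algebra.adjoin_singleton_eq_range_aeval] at hz
  obtain ⟨P, hP⟩ := hz
  set w := sqrtC d with hw
  set q : ℚ[X] := X ^ 2 - C (d : ℚ) with hq
  have hqm : q.Monic := monic_X_pow_sub_C _ two_ne_zero
  have hq0 : aeval w q = 0 := by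
    simp [hq, sqrtC_sq, hw]
  have key : aeval w (P %ₘ q) = (z : ℂ) := by
    have hdiv := Polynomial.modByMonic_add_div P q
    have := congrArg (aeval w) hdiv
    rw [map_add, map_mul, hq0, zero_mul, add_zero] at this
    exact this.trans hP
  have hdeg : (P %ₘ q).degree ≤ 1 := by
    have h2 : q.degree = 2 := by
      rw [hq]
      exact degree_X_pow_sub_C (by norm_num) _
    have := Polynomial.degree_modByMonic_lt P hqm
    rw [h2] at this
    exact Order.le_of_lt_succ (by exact_mod_cast this)
  refine ⟨(P %ₘ q).coeff 0, (P %ₘ q).coeff 1, ?_⟩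
  have hc : ∀ c : ℚ, algebraMap ℚ ℂ c = (c : ℂ) := fun c => by simp
  rw [← key]
  conv_lhs => rw [Polynomial.eq_X_add_C_of_degree_le_one hdeg]
  simp only [map_add, map_mul, aeval_C, aeval_X]
  rw [hc, hc]
  ring

lemma int_of_rat_isIntegral {q : ℚ} (h : IsIntegral ℤ ((q : ℂ))) : ∃ s : ℤ, (s : ℚ) = q := by
  have h2 : IsIntegral ℤ q := by
    have : algebraMap ℚ ℂ q = (q : ℂ) := by simp
    rw [← this] at h
    exact (isIntegral_algebraMap_iff (algebraMap ℚ ℂ).injective).mp h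
  exact IsIntegrallyClosed.isIntegral_iff.mp h2

lemma endgame (m : ℤ) (hm : 3 ≤ m) (hmodd : Odd m) (p : ℕ) (hp3 : 3 ≤ p)
    (hsf : Squarefree (2 * m ^ p - 1)) (s t : ℤ)
    (hkey : t ^ 2 = (2 * m ^ p - 1) * (8 * m - s ^ 2)) : False := by
  have h9 : (9 : ℤ) ≤ m * m := by nlinarith
  have h9m : 9 * m ≤ m ^ 3 := by nlinarith
  have hmp : m ^ 3 ≤ m ^ p := pow_le_pow_right₀ (by linarith) hp3
  have hbig : 8 * m < 2 * m ^ p - 1 := by linarith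
  have hnpos : (0 : ℤ) < 2 * m ^ p - 1 := by linarith
  rcases eq_or_ne t 0 with ht | ht
  · rw [ht] at hkey
    have h8 : s ^ 2 = 8 * m := by
      have h0 : (2 * m ^ p - 1) * (8 * m - s ^ 2) = 0 := by linarith
      rcases mul_eq_zero.mp h0 with h | h
      · omega
      · linarith
    have hes : Even (s ^ 2) := ⟨4 * m, by linarith⟩
    obtain ⟨u, hu⟩ : Even s := (Int.even_pow.mp hes).1
    subst hu
    have hu2 : u ^ 2 = 2 * m := by nlinarith
    have heu : Even (u ^ 2) := ⟨m, by linarith⟩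
    obtain ⟨v, hv⟩ : Even u := (Int.even_pow.mp heu).1
    subst hv
    have : Even m := ⟨v * v, by nlinarith⟩
    exact (Int.not_odd_iff_even.mpr this) hmodd
  · have hdvd : 2 * m ^ p - 1 ∣ t := by
      have h1 : 2 * m ^ p - 1 ∣ t ^ 2 := ⟨8 * m - s ^ 2, hkey⟩
      exact (hsf.dvd_pow_iff_dvd two_ne_zero).mp h1
    have habs : 2 * m ^ p - 1 ≤ |t| := Int.le_of_dvd (abs_pos.mpr ht) ((dvd_abs _ t).mpr hdvd)
    have h2 : (2 * m ^ p - 1) * (2 * m ^ p - 1) ≤ t ^ 2 := by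
      have h3 := mul_le_mul habs habs (by linarith) (abs_nonneg t)
      have h4 : |t| * |t| = t ^ 2 := by rw [abs_mul_abs_self]; ring
      linarith
    have h5 : (2 * m ^ p - 1) * (8 * m - s ^ 2) < (2 * m ^ p - 1) * (2 * m ^ p - 1) :=
      mul_lt_mul_of_pos_left (by nlinarith [sq_nonneg s]) hnpos
    linarith

/-- If `m ≥ 3` is odd and `p` is an odd prime such that `2 m ^ p - 1` is square-free, then
neither `2 ^ ((p-1)/2) (1 + √(1 - 2 m ^ p))` nor its negative is a `p`-th power of an element
of the ring of integers of `ℚ(√(1 - 2 m ^ p))`. -/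
theorem not_pth_power_of_squarefree
    (m : ℤ) (hm : 3 ≤ m) (hmodd : Odd m)
    (p : ℕ) (hp : p.Prime) (hpodd : Odd p)
    (hsf : Squarefree (2 * m ^ p - 1)) :
    ¬ ∃ β : 𝓞 (Qsqrt (1 - 2 * m ^ p)),
        (β : Qsqrt (1 - 2 * m ^ p)) ^ p =
            2 ^ ((p - 1) / 2) * (1 + sqrtElem (1 - 2 * m ^ p)) ∨
        (β : Qsqrt (1 - 2 * m ^ p)) ^ p =
            -(2 ^ ((p - 1) / 2) * (1 + sqrtElem (1 - 2 * m ^ p))) := by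
  obtain ⟨k, hk⟩ := hpodd
  have hp3 : 3 ≤ p := by
    have := hp.two_le
    omega
  set d : ℤ := 1 - 2 * m ^ p with hd
  rintro ⟨β, hβ⟩
  have hmp1 : (1 : ℤ) ≤ m ^ p := one_le_pow₀ (by linarith)
  have hdneg : d < 0 := by omega
  obtain ⟨hre, him⟩ := sqrtC_props hdneg
  set w : ℂ := sqrtC d with hw
  set z : ℂ := ((β : Qsqrt d) : ℂ) with hz
  have hdR : ((d:ℤ):ℝ) = 1 - 2*(m:ℝ)^p := by rw [hd]; push_cast; ring
  have hzKint : IsIntegral ℤ ((β : Qsqrt d)) := β.2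
  have hzint : IsIntegral ℤ z :=
    hzKint.map ((Qsqrt d).val.toRingHom.toIntAlgHom)
  have hwint : IsIntegral ℤ w := isIntegral_int_sqrtC d
  have h22 : ((2 : Qsqrt d) : ℂ) = 2 := rfl
  -- the equation over ℂ
  have hzp : z ^ p = (2:ℂ) ^ ((p-1)/2) * (1 + w) ∨
      z ^ p = -((2:ℂ) ^ ((p-1)/2) * (1 + w)) := by
    rcases hβ with h | h
    · left
      have h2 := congrArg (fun x : Qsqrt d => (x : ℂ)) h
      push_cast [h22] at h2
      exact h2
    · right
      have h2 := congrArg (fun x : Qsqrt d => (x : ℂ)) h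
      push_cast [h22] at h2
      exact h2
  -- norms
  have hnorm2 : Complex.normSq 2 = 4 := by
    simp [Complex.normSq_apply]
    norm_num
  have hnorm1w : Complex.normSq (1 + w) = 2 * (m:ℝ) ^ p := by
    rw [Complex.normSq_apply]
    simp only [Complex.add_re, Complex.add_im, Complex.one_re, Complex.one_im, hre]
    linear_combination him - hdR
  have hkeyR : (Complex.normSq z) ^ p = (2 * (m:ℝ)) ^ p := by
    have h1 : Complex.normSq (z ^ p) = Complex.normSq ((2:ℂ) ^ ((p-1)/2) * (1 + w)) := by
      rcases hzp with h | h <;> rw [h]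
      rw [Complex.normSq_neg]
    rw [map_pow] at h1
    rw [h1, map_mul, map_pow, hnorm2, hnorm1w]
    have h4 : (4 : ℝ) ^ ((p-1)/2) = 2 ^ (p - 1) := by
      rw [show (4:ℝ) = 2 ^ 2 by norm_num, ← pow_mul]
      congr 1
      omega
    have h2p : (2:ℝ) ^ p = 2 ^ (p-1) * 2 := by
      rw [← pow_succ]
      congr 1
      omega
    rw [h4, mul_pow, h2p]
    ring
  have hA : Complex.normSq z = 2 * (m:ℝ) := by
    have h0 : (0:ℝ) ≤ Complex.normSq z := Complex.normSq_nonneg z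
    have h0' : (0:ℝ) ≤ 2 * (m:ℝ) := by
      have hr : (0:ℝ) ≤ (m:ℝ) := by exact_mod_cast (by linarith : (0:ℤ) ≤ m)
      linarith
    exact (pow_left_strictMonoOn₀ hp.ne_zero).injOn h0 h0' hkeyR
  -- rational representation
  obtain ⟨a, b, hab⟩ := Qsqrt_repr ((β : Qsqrt d))
  rw [← hz, ← hw] at hab
  have hz_re : z.re = (a : ℝ) := by
    rw [hab]
    simp [Complex.add_re, Complex.mul_re, hre]
  have hz_im : z.im = (b : ℝ) * w.im := by
    rw [hab]
    simp [Complex.add_im, Complex.mul_im, hre]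
  have hnq : (a : ℚ)^2 - (b : ℚ)^2 * ((d : ℤ) : ℚ) = 2 * (m : ℚ) := by
    have hR : (a:ℝ)^2 - (b:ℝ)^2 * ((d:ℤ):ℝ) = 2 * (m:ℝ) := by
      rw [← hA, Complex.normSq_apply, hz_re, hz_im]
      linear_combination (-(b:ℝ)^2) * him
    exact_mod_cast hR
  -- conjugation
  have hcw : (starRingEnd ℂ) w = -w := by
    apply Complex.ext <;> simp [hre]
  have hconj : (starRingEnd ℂ) z = (a:ℂ) - (b:ℂ) * w := by
    rw [hab, map_add, map_mul, hcw, map_ratCast, map_ratCast]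
    ring
  have hw2 : w ^ 2 = ((d:ℤ):ℂ) := sqrtC_sq d
  have hint1 : IsIntegral ℤ (((2*a : ℚ) : ℂ)) := by
    have he : ((2*a:ℚ):ℂ) = z + (starRingEnd ℂ) z := by
      rw [hconj, hab]
      push_cast
      ring
    rw [he]
    exact hzint.add (hzint.map (starRingEnd ℂ).toIntAlgHom)
  obtain ⟨s, hs⟩ := int_of_rat_isIntegral hint1
  have hint2 : IsIntegral ℤ (((2*b*(d:ℚ) : ℚ) : ℂ)) := by
    have he : ((2*b*(d:ℚ):ℚ):ℂ) = w * z + (starRingEnd ℂ) (w * z) := by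
      rw [map_mul, hcw, hconj, hab]
      push_cast
      linear_combination (-2*(b:ℂ)) * hw2
    rw [he]
    exact (hwint.mul hzint).add ((hwint.mul hzint).map (starRingEnd ℂ).toIntAlgHom)
  obtain ⟨t, ht⟩ := int_of_rat_isIntegral hint2
  -- combine to integer equation
  have hdQ : ((d:ℤ):ℚ) = 1 - 2*(m:ℚ)^p := by
    rw [hd]; push_cast; ring
  have hkeyQ : ((t:ℚ))^2 = (2*(m:ℚ)^p - 1) * (8*(m:ℚ) - (s:ℚ)^2) := by
    linear_combination ((t:ℚ) + 2*b*(d:ℚ)) * ht + (-4*((d:ℤ):ℚ)) * hnq +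
      (-((d:ℤ):ℚ)*((s:ℚ)+2*a)) * hs + (-(8*(m:ℚ) - (s:ℚ)^2)) * hdQ
  have hkeyZ : t ^ 2 = (2 * m ^ p - 1) * (8 * m - s ^ 2) := by
    exact_mod_cast hkeyQ
  exact endgame m hm hmodd p hp3 hsf s t hkeyZ
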